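/- Let f : H → ℝ be continuous and quasiconvex on a real Hilbert space H, let X⋆ be its set of minimizers over a feasible set with minimum value f⋆, and let x ∈ H satisfy f⋆ < f(x). Suppose f satisfies the Hölder condition with degree β > 0 and constant L at some x⋆ ∈ X⋆ on the closure of the strict sublevel set lev_{<f(x)} f (i.e., |f(z) − f(x⋆)| ≤ L‖z − x⋆‖^β for all z in that closure). Then for every unit vector g in the normal-cone subdifferential ∂⋆f(x) := {g ∈ H : ⟨g, y − x⟩ ≤ 0 for all y with f(y) < f(x)}, one has f(x) − f⋆ ≤ L⟨g, x − x⋆⟩^β. -/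

import Mathlib

/-- Proposition 2.4 (Konnov): relating the function value gap to the inner product
with a unit normal-cone subgradient, under a Hölder condition. -/
theorem stmt_1 {H : Type*} [NormedAddCommGroup H] [InnerProductSpace ℝ H]
    (f : H → ℝ) (hcont : Continuous f)
    (hqc : ∀ u v : H, ∀ α : ℝ, α ∈ Set.Icc (0:ℝ) 1 →
      f ((1 - α) • u + α • v) ≤ max (f u) (f v))
    (fstar : ℝ) (xstar : H) (hfs : f xstar = fstar)
    (x : H) (hlt : fstar < f x)
    (β L : ℝ) (hβ : 0 < β)
    (hhold : ∀ z ∈ closure {w : H | f w < f x}, |f z - f xstar| ≤ L * ‖z - xstar‖ ^ β)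
    (g : H) (hg : ∀ y : H, f y < f x → (inner ℝ g (y - x) : ℝ) ≤ 0) (hgnorm : ‖g‖ = 1) :
    f x - fstar ≤ L * (inner ℝ g (x - xstar) : ℝ) ^ β := by
  set d : ℝ := (inner ℝ g (x - xstar) : ℝ) with hd
  have hgg : (inner ℝ g g : ℝ) = 1 := by
    have := real_inner_self_eq_norm_sq g
    rw [hgnorm] at this
    simpa using this
  have hinner : ∀ s : ℝ, (inner ℝ g (xstar + s • g - x) : ℝ) = s - d := by
    intro s
    have hpt : xstar + s • g - x = s • g - (x - xstar) := by abel
    rw [hpt, inner_sub_right, real_inner_smul_right, hgg, ← hd]; ring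
  have hxstarlt : f xstar < f x := by rw [hfs]; exact hlt
  have hd0 : 0 ≤ d := by
    have h1 := hg xstar hxstarlt
    have h2 : (inner ℝ g (xstar - x) : ℝ) = -d := by
      have : xstar - x = -(x - xstar) := by abel
      rw [this, inner_neg_right, ← hd]
    rw [h2] at h1
    linarith
  -- the set of nonnegative step sizes where f has reached f x
  set S : Set ℝ := {s : ℝ | 0 ≤ s ∧ f x ≤ f (xstar + s • g)} with hS
  have hmemS : ∀ s : ℝ, d < s → s ∈ S := by
    intro s hs
    refine ⟨by linarith, ?_⟩
    by_contra hcon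
    push_neg at hcon
    have := hg _ hcon
    rw [hinner s] at this
    linarith
  have hSclosed : IsClosed S := by
    have h2 : IsClosed {s : ℝ | f x ≤ f (xstar + s • g)} :=
      isClosed_le continuous_const (hcont.comp (by continuity))
    exact isClosed_Ici.inter h2
  have hSne : S.Nonempty := ⟨d + 1, hmemS _ (by linarith)⟩
  have hSbdd : BddBelow S := ⟨0, fun s hs => hs.1⟩
  set t : ℝ := sInf S with ht
  have htmem : t ∈ S := hSclosed.csInf_mem hSne hSbdd
  have htd : t ≤ d := by
    by_contra h
    push_neg at h
    have he : (d + t) / 2 ∈ S := hmemS _ (by linarith)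
    have := csInf_le hSbdd he
    linarith
  have ht0 : 0 < t := by
    rcases lt_or_eq_of_le htmem.1 with h | h
    · exact h
    · exfalso
      have := htmem.2
      rw [← h] at this
      simp at this
      linarith
  set z : H := xstar + t • g with hz
  have hzcl : z ∈ closure {w : H | f w < f x} := by
    rw [Metric.mem_closure_iff]
    intro ε hε
    set δ : ℝ := min (t / 2) (ε / 2) with hδ
    have hδpos : 0 < δ := lt_min (by linarith) (by linarith)
    have hδt : δ ≤ t / 2 := min_le_left _ _
    have hδε : δ ≤ ε / 2 := min_le_right _ _
    refine ⟨xstar + (t - δ) • g, ?_, ?_⟩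
    · show f (xstar + (t - δ) • g) < f x
      by_contra hcon
      push_neg at hcon
      have hmem : t - δ ∈ S := ⟨by linarith, hcon⟩
      have := csInf_le hSbdd hmem
      linarith
    · rw [dist_eq_norm]
      have heq : z - (xstar + (t - δ) • g) = δ • g := by
        rw [hz, show (δ : ℝ) = t - (t - δ) by ring, sub_smul]
        abel
      rw [heq, norm_smul, hgnorm, mul_one, Real.norm_eq_abs, abs_of_pos hδpos]
      linarith
  have hznorm : ‖z - xstar‖ = t := by
    rw [hz, add_sub_cancel_left, norm_smul, hgnorm, mul_one, Real.norm_eq_abs,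
      abs_of_pos ht0]
  have hhz := hhold z hzcl
  rw [hznorm] at hhz
  have hfz : f x ≤ f z := htmem.2
  have habs : |f z - f xstar| = f z - f xstar := abs_of_pos (by linarith)
  rw [habs, hfs] at hhz
  -- so f x - fstar ≤ L * t ^ β
  have hkey : f x - fstar ≤ L * t ^ β := by linarith
  have htβ : 0 < t ^ β := Real.rpow_pos_of_pos ht0 β
  have hL : 0 < L := by
    by_contra h
    push_neg at h
    have : L * t ^ β ≤ 0 := mul_nonpos_iff.mpr (Or.inr ⟨h, htβ.le⟩)
    linarith
  have hmono : t ^ β ≤ d ^ β := Real.rpow_le_rpow ht0.le htd hβ.le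
  calc f x - fstar ≤ L * t ^ β := hkey
    _ ≤ L * d ^ β := by
        exact mul_le_mul_of_nonneg_left hmono hL.le
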